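/- Assume D ≠ 0 and T² − 4D < 0. Then the zero set of V is exactly the equilibrium point of the system: V(x,y) = 0 if and only if x = a/D and y = aT/D. -/
import Mathlib

/-- The quadratic inverse integrating factor
`V(x,y) = D²x² − DTxy + Dy² + a(T² − 2D)x − aTy + a²`. -/
noncomputable def V (a T D x y : ℝ) : ℝ :=
  D ^ 2 * x ^ 2 - D * T * x * y + D * y ^ 2 + a * (T ^ 2 - 2 * D) * x - a * T * y + a ^ 2

/-- If `D ≠ 0` and `T² − 4D < 0`, the zero set of `V` is exactly the equilibrium
point `(a/D, aT/D)` of the system. -/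
theorem stmt_3 (a T D : ℝ) (hD : D ≠ 0) (h : T ^ 2 - 4 * D < 0) (x y : ℝ) :
    V a T D x y = 0 ↔ x = a / D ∧ y = a * T / D := by
  have hDpos : 0 < D := by nlinarith [sq_nonneg T]
  have key : 4 * D * V a T D x y =
      (2 * D * y - D * T * x - a * T) ^ 2 + (4 * D - T ^ 2) * (D * x - a) ^ 2 := by
    unfold V; ring
  constructor
  · intro hV
    have h0 : (2 * D * y - D * T * x - a * T) ^ 2 + (4 * D - T ^ 2) * (D * x - a) ^ 2 = 0 := by
      rw [← key, hV]; ring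
    have hsq : (D * x - a) ^ 2 ≤ 0 := by
      nlinarith [sq_nonneg (2 * D * y - D * T * x - a * T)]
    have hx : D * x - a = 0 := by
      have := sq_nonneg (D * x - a); nlinarith
    have hy : 2 * D * y - D * T * x - a * T = 0 := by nlinarith [sq_nonneg (D * x - a)]
    constructor
    · field_simp; linear_combination hx
    · field_simp; linear_combination (1/2 : ℝ) * hy + (T/2) * hx
  · rintro ⟨hx, hy⟩
    subst hx; subst hy
    unfold V
    field_simp
    ring
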